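/- Let 1/2 < δ < 1 and V₁ > 0. Then every bounded trajectory of the two-dimensional ring system converges to E_W = (V₁/(1−δ), 0): if r : [0, ∞) → ℝ² is a differentiable solution of the system and there exists M such that ‖r(t)‖ ≤ M for all t ≥ 0, then r(t) → (V₁/(1−δ), 0) as t → ∞. -/

import Mathlib

open Filter

private lemma ring_key (δ V₁ c x : ℝ) (hδ1 : 1/2 < δ) (hδ2 : δ < 1) (hV : 0 < V₁)
    (hc : V₁ = (1-δ)*c) :
    (x - c) * (-x + max (δ*x + V₁) 0 - max (-(δ*x)) 0)
      ≤ -((1-δ)^2) * (x - c)^2 := by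
  have h1 : (0:ℝ) < 1 - δ := by linarith
  have hcpos : 0 < c := by nlinarith
  rcases le_or_gt 0 x with hx | hx
  · rw [max_eq_left (by nlinarith), max_eq_right (by nlinarith)]
    nlinarith [mul_nonneg (mul_nonneg (by linarith : (0:ℝ) ≤ δ) h1.le) (sq_nonneg (x - c))]
  · rcases le_or_gt 0 (δ*x + V₁) with h2 | h2
    · rw [max_eq_left h2, max_eq_left (by nlinarith)]
      nlinarith [mul_nonneg (mul_nonneg (by linarith : (0:ℝ) ≤ δ) h2) (by nlinarith : 0 ≤ c - x)]
    · rw [max_eq_right h2.le, max_eq_left (by nlinarith)]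
      nlinarith [mul_nonneg (mul_nonneg h1.le (by linarith : 0 ≤ -(δ*x) - V₁)) (by nlinarith : 0 ≤ c - x)]

/-- For `1/2 < δ < 1` and `V₁ > 0`, every bounded trajectory of the
two-dimensional ring system converges to `E_W = (V₁/(1-δ), 0)`. -/
theorem stmt3 (δ V₁ : ℝ) (hδ1 : 1/2 < δ) (hδ2 : δ < 1) (hV : 0 < V₁)
    (r₁ r₂ : ℝ → ℝ)
    (h₁ : ∀ t ≥ (0 : ℝ), HasDerivAt r₁ (-r₁ t + max (δ * (r₁ t - r₂ t) + V₁) 0) t)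
    (h₂ : ∀ t ≥ (0 : ℝ), HasDerivAt r₂ (-r₂ t + max (δ * (r₂ t - r₁ t)) 0) t)
    (M : ℝ) (hM : ∀ t ≥ (0 : ℝ), ‖(r₁ t, r₂ t)‖ ≤ M) :
    Tendsto (fun t => (r₁ t, r₂ t)) atTop (nhds (V₁ / (1 - δ), 0)) := by
  have h1δ : (0:ℝ) < 1 - δ := by linarith
  set c : ℝ := V₁ / (1 - δ) with hc_def
  have hc : V₁ = (1 - δ) * c := by rw [hc_def, mul_div_assoc', eq_div_iff h1δ.ne']; ring
  have hcpos : 0 < c := by nlinarith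
  set κ : ℝ := (1 - δ)^2 with hκ_def
  have hκpos : 0 < κ := by positivity
  set S : ℝ → ℝ := fun t => r₁ t - r₂ t with hS_def
  -- derivative of S
  have hSd : ∀ t ≥ (0:ℝ), HasDerivAt S
      (-S t + max (δ * S t + V₁) 0 - max (-(δ * S t)) 0) t := by
    intro t ht
    have h := (h₁ t ht).sub (h₂ t ht)
    have e : δ * (r₂ t - r₁ t) = -(δ * (r₁ t - r₂ t)) := by ring
    rw [e] at h
    refine h.congr_deriv ?_
    simp only [hS_def]
    ring
  -- Lyapunov function φ and its exponential tilt ψ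
  set φ : ℝ → ℝ := fun t => (S t - c)^2 with hφ_def
  have hφd : ∀ t ≥ (0:ℝ), HasDerivAt φ
      (2*(S t - c)*(-S t + max (δ * S t + V₁) 0 - max (-(δ * S t)) 0)) t := by
    intro t ht
    have h := ((hSd t ht).sub_const c).pow 2
    refine h.congr_deriv ?_
    push_cast
    ring
  set ψ : ℝ → ℝ := fun t => Real.exp (2*κ*t) * φ t with hψ_def
  have hψd : ∀ t ≥ (0:ℝ), HasDerivAt ψ
      (Real.exp (2*κ*t) * (2*κ*1) * φ t +
        Real.exp (2*κ*t) * (2*(S t - c)*(-S t + max (δ * S t + V₁) 0 - max (-(δ * S t)) 0))) t := by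
    intro t ht
    have hexp : HasDerivAt (fun u => Real.exp (2*κ*u)) (Real.exp (2*κ*t) * (2*κ*1)) t :=
      (((hasDerivAt_id t).const_mul (2*κ)).exp)
    exact hexp.mul (hφd t ht)
  have hψd_le : ∀ t ≥ (0:ℝ),
      Real.exp (2*κ*t) * (2*κ*1) * φ t +
        Real.exp (2*κ*t) * (2*(S t - c)*(-S t + max (δ * S t + V₁) 0 - max (-(δ * S t)) 0)) ≤ 0 := by
    intro t ht
    have hk := ring_key δ V₁ c (S t) hδ1 hδ2 hV hc
    have he : (0:ℝ) < Real.exp (2*κ*t) := Real.exp_pos _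
    have : (2*κ*1) * φ t + 2*(S t - c)*(-S t + max (δ * S t + V₁) 0 - max (-(δ * S t)) 0) ≤ 0 := by
      simp only [hφ_def, hκ_def]
      nlinarith [hk]
    nlinarith [this, he, mul_le_mul_of_nonneg_left this he.le]
  -- ψ is antitone on [0,∞)
  have hψanti : AntitoneOn ψ (Set.Ici (0:ℝ)) := by
    apply antitoneOn_of_deriv_nonpos (convex_Ici 0)
    · intro t ht
      exact (hψd t ht).continuousAt.continuousWithinAt
    · intro t ht
      rw [interior_Ici] at ht
      exact (hψd t ht.le).differentiableAt.differentiableWithinAt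
    · intro t ht
      rw [interior_Ici] at ht
      rw [(hψd t ht.le).deriv]
      exact hψd_le t ht.le
  -- exponential decay of φ
  have hφ_bound : ∀ t ≥ (0:ℝ), φ t ≤ φ 0 * Real.exp (-(2*κ*t)) := by
    intro t ht
    have h := hψanti (Set.self_mem_Ici) (Set.mem_Ici.mpr ht) ht
    simp only [hψ_def, mul_zero, Real.exp_zero, one_mul] at h
    have he : (0:ℝ) < Real.exp (2*κ*t) := Real.exp_pos _
    rw [Real.exp_neg, ← div_eq_mul_inv, le_div_iff₀ he]
    linarith [h]
  have hφ0 : Tendsto φ atTop (nhds 0) := by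
    have hneg : Tendsto (fun t : ℝ => -(2*κ*t)) atTop atBot := by
      apply Filter.tendsto_neg_atBot_iff.mpr
      exact Tendsto.const_mul_atTop (by positivity) tendsto_id
    have hexp0 : Tendsto (fun t : ℝ => φ 0 * Real.exp (-(2*κ*t))) atTop (nhds 0) := by
      have := Tendsto.const_mul (φ 0) (Real.tendsto_exp_atBot.comp hneg)
      simpa [Function.comp_def] using this
    apply tendsto_of_tendsto_of_tendsto_of_le_of_le' tendsto_const_nhds hexp0
    · filter_upwards with t
      positivity
    · filter_upwards [eventually_ge_atTop (0:ℝ)] with t ht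
      exact hφ_bound t ht
  -- S tends to c
  have hSc : Tendsto S atTop (nhds c) := by
    have habs : Tendsto (fun t => |S t - c|) atTop (nhds 0) := by
      have h := (Real.continuous_sqrt.tendsto 0).comp hφ0
      simpa [Function.comp_def, hφ_def, Real.sqrt_sq_eq_abs] using h
    have h0 : Tendsto (fun t => S t - c) atTop (nhds 0) := by
      rw [tendsto_zero_iff_norm_tendsto_zero]
      simpa [Real.norm_eq_abs] using habs
    have := h0.add_const c
    simpa using this
  -- eventually S t > c/2 > 0
  have hev : ∀ᶠ t in atTop, c/2 < S t :=
    hSc.eventually (eventually_gt_nhds (by linarith))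
  obtain ⟨T₀, hT₀⟩ := eventually_atTop.mp hev
  set T : ℝ := max T₀ 0 with hT_def
  have hT0 : (0:ℝ) ≤ T := le_max_right _ _
  -- for t ≥ T, r₂' = -r₂
  have hr₂d : ∀ t ≥ T, HasDerivAt r₂ (-r₂ t) t := by
    intro t ht
    have hS_pos : c/2 < S t := hT₀ t (le_trans (le_max_left _ _) ht)
    have h := h₂ t (le_trans hT0 ht)
    have hneg : δ * (r₂ t - r₁ t) ≤ 0 := by
      have : r₂ t - r₁ t = -(S t) := by simp [hS_def]
      rw [this]
      have hδpos : (0:ℝ) < δ := by linarith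
      nlinarith
    rw [max_eq_right hneg] at h
    simpa using h
  -- ψ₂ = exp(t) * r₂ t is constant on [T, ∞)
  set ψ₂ : ℝ → ℝ := fun t => Real.exp t * r₂ t with hψ₂_def
  have hψ₂d : ∀ t ≥ T, HasDerivAt ψ₂ 0 t := by
    intro t ht
    have h := (Real.hasDerivAt_exp t).mul (hr₂d t ht)
    refine h.congr_deriv ?_
    ring
  have hψ₂const : ∀ t ≥ T, ψ₂ t = ψ₂ T := by
    have hcont : ContinuousOn ψ₂ (Set.Ici T) :=
      fun t ht => (hψ₂d t ht).continuousAt.continuousWithinAt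
    have hdiff : DifferentiableOn ℝ ψ₂ (interior (Set.Ici T)) := by
      rw [interior_Ici]
      exact fun t ht => (hψ₂d t ht.le).differentiableAt.differentiableWithinAt
    have hderiv0 : ∀ t ∈ interior (Set.Ici T), deriv ψ₂ t = 0 := by
      rw [interior_Ici]
      exact fun t ht => (hψ₂d t ht.le).deriv
    have hmono : MonotoneOn ψ₂ (Set.Ici T) :=
      monotoneOn_of_deriv_nonneg (convex_Ici T) hcont hdiff
        (fun t ht => le_of_eq (hderiv0 t ht).symm)
    have hanti : AntitoneOn ψ₂ (Set.Ici T) :=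
      antitoneOn_of_deriv_nonpos (convex_Ici T) hcont hdiff
        (fun t ht => le_of_eq (hderiv0 t ht))
    intro t ht
    exact le_antisymm (hanti Set.self_mem_Ici (Set.mem_Ici.mpr ht) ht)
      (hmono Set.self_mem_Ici (Set.mem_Ici.mpr ht) ht)
  -- r₂ tends to 0
  have hr₂0 : Tendsto r₂ atTop (nhds 0) := by
    have hlim : Tendsto (fun t : ℝ => Real.exp (-t) * ψ₂ T) atTop (nhds 0) := by
      rw [show (0:ℝ) = 0 * ψ₂ T by ring]
      exact (Real.tendsto_exp_neg_atTop_nhds_zero).mul_const _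
    apply hlim.congr'
    filter_upwards [eventually_ge_atTop T] with t ht
    have h := hψ₂const t ht
    have he : Real.exp t ≠ 0 := (Real.exp_pos t).ne'
    simp only [hψ₂_def] at h ⊢
    rw [Real.exp_neg, ← h, inv_mul_cancel_left₀ he]
  -- r₁ tends to c
  have hr₁c : Tendsto r₁ atTop (nhds c) := by
    have h := hSc.add hr₂0
    rw [add_zero] at h
    apply h.congr
    intro t
    simp [hS_def]
  exact hr₁c.prodMk_nhds hr₂0
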